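/- The set of integral binary cubic forms with zero discriminant of 'type II' decomposes as the disjoint union L₀(II) = ⊔_{m ≥ 1} ⊔_{0 ≤ n < m} ⊔_{γ ∈ SL₂(ℤ)} γ·(0,0,m,n); that is, every nonzero integral binary cubic form of discriminant zero that is not SL₂(ℤ)-equivalent to a form (0,0,0,k) is SL₂(ℤ)-equivalent to exactly one form (0,0,m,n) with m ≥ 1 and 0 ≤ n < m, and its stabilizer in SL₂(ℤ) is trivial for such forms. -/

import Mathlib

noncomputable section

/-- Evaluation of the integral binary cubic form with coefficient vector `v = (a,b,c,d)`. -/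
def formEvalZ (v : Fin 4 → ℤ) (x y : ℤ) : ℤ :=
  v 0 * x ^ 3 + v 1 * x ^ 2 * y + v 2 * x * y ^ 2 + v 3 * y ^ 3

/-- `cubicActsZ γ v w` states that `w = γ · v` for the twisted action of `SL₂(ℤ)`. -/
def cubicActsZ (γ : Matrix (Fin 2) (Fin 2) ℤ) (v w : Fin 4 → ℤ) : Prop :=
  ∀ x y : ℤ, formEvalZ w x y =
    formEvalZ v (x * γ 0 0 + y * γ 1 0) (x * γ 0 1 + y * γ 1 1)

/-- Discriminant of an integral binary cubic form. -/
def cubicDiscZ (v : Fin 4 → ℤ) : ℤ :=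
  18 * v 0 * v 1 * v 2 * v 3 + v 1 ^ 2 * v 2 ^ 2 - 4 * v 0 * v 2 ^ 3
    - 4 * v 1 ^ 3 * v 3 - 27 * v 0 ^ 2 * v 3 ^ 2

lemma formEval_ext {v w : Fin 4 → ℤ}
    (h : ∀ x y : ℤ, formEvalZ v x y = formEvalZ w x y) :
    v 0 = w 0 ∧ v 1 = w 1 ∧ v 2 = w 2 ∧ v 3 = w 3 := by
  have h1 := h 1 0
  have h2 := h 0 1
  have h3 := h 1 1
  have h4 := h 1 (-1)
  simp only [formEvalZ] at h1 h2 h3 h4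
  ring_nf at h1 h2 h3 h4
  exact ⟨by linarith, by linarith, by linarith, by linarith⟩

lemma acts_comp {γ δ : Matrix (Fin 2) (Fin 2) ℤ} {u v w : Fin 4 → ℤ}
    (h1 : cubicActsZ γ u v) (h2 : cubicActsZ δ v w) :
    cubicActsZ (δ * γ) u w := by
  intro x y
  rw [h2 x y, h1]
  congr 1 <;>
  · simp [Matrix.mul_apply, Fin.sum_univ_two]
    ring

def adj2 (γ : Matrix (Fin 2) (Fin 2) ℤ) : Matrix (Fin 2) (Fin 2) ℤ :=
  !![γ 1 1, -(γ 0 1); -(γ 1 0), γ 0 0]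

lemma adj2_det {γ : Matrix (Fin 2) (Fin 2) ℤ} (hdet : γ.det = 1) : (adj2 γ).det = 1 := by
  rw [Matrix.det_fin_two] at hdet
  simp [adj2, Matrix.det_fin_two_of]
  linarith

lemma acts_inv {γ : Matrix (Fin 2) (Fin 2) ℤ} {u w : Fin 4 → ℤ}
    (hdet : γ.det = 1) (h : cubicActsZ γ u w) : cubicActsZ (adj2 γ) w u := by
  rw [Matrix.det_fin_two] at hdet
  intro x y
  rw [h]
  have e1 : (x * adj2 γ 0 0 + y * adj2 γ 1 0) * γ 0 0
      + (x * adj2 γ 0 1 + y * adj2 γ 1 1) * γ 1 0 = x := by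
    simp [adj2]; linear_combination x * hdet
  have e2 : (x * adj2 γ 0 0 + y * adj2 γ 1 0) * γ 0 1
      + (x * adj2 γ 0 1 + y * adj2 γ 1 1) * γ 1 1 = y := by
    simp [adj2]; linear_combination y * hdet
  rw [e1, e2]

lemma canonical_eq {m n m' n' : ℤ} (hm : 1 ≤ m) (hn : 0 ≤ n) (hnm : n < m)
    (hm' : 1 ≤ m') (hn' : 0 ≤ n') (hnm' : n' < m')
    {γ : Matrix (Fin 2) (Fin 2) ℤ} (hdet : γ.det = 1)
    (h : cubicActsZ γ ![0,0,m,n] ![0,0,m',n']) : m = m' ∧ n = n' ∧ γ = 1 := by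
  rw [Matrix.det_fin_two] at hdet
  set e := γ 0 0 with he
  set f := γ 0 1 with hf
  set g := γ 1 0 with hg
  set hh := γ 1 1 with hhh
  have key : ∀ x y : ℤ, formEvalZ ![0,0,m',n'] x y =
      formEvalZ ![m*e*f^2 + n*f^3,
                  2*m*e*f*hh + m*f^2*g + 3*n*f^2*hh,
                  m*e*hh^2 + 2*m*f*g*hh + 3*n*f*hh^2,
                  m*g*hh^2 + n*hh^3] x y := by
    intro x y
    rw [h x y]
    simp only [formEvalZ, Matrix.cons_val_zero, Matrix.cons_val_one, Matrix.head_cons,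
      Matrix.cons_val_two, Matrix.tail_cons, Matrix.cons_val_three]
    ring
  obtain ⟨E0, E1, E2, E3⟩ := formEval_ext key
  simp only [Matrix.cons_val_zero, Matrix.cons_val_one, Matrix.head_cons,
    Matrix.cons_val_two, Matrix.tail_cons, Matrix.cons_val_three] at E0 E1 E2 E3
  have hf0 : f = 0 := by
    by_contra hf0
    have hS : m*e + n*f = 0 := by
      have h2 : f^2 * (m*e + n*f) = 0 := by linear_combination -E0
      rcases mul_eq_zero.mp h2 with h' | h'
      · exact absurd (sq_eq_zero_iff.mp h') hf0
      · exact h'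
    have hT : m*g + n*hh = 0 := by
      have h2 : f^2 * (m*g + n*hh) = 0 := by linear_combination -E1 - 2*f*hh*hS
      rcases mul_eq_zero.mp h2 with h' | h'
      · exact absurd (sq_eq_zero_iff.mp h') hf0
      · exact h'
    have : m' = 0 := by linear_combination E2 + hh^2*hS + 2*f*hh*hT
    omega
  rw [hf0] at hdet
  have heh : e * hh = 1 := by linarith
  rcases Int.eq_one_or_neg_one_of_mul_eq_one' heh with ⟨he1, hh1⟩ | ⟨he1, hh1⟩
  · have hmm : m = m' := by
      rw [hf0, he1, hh1] at E2; ring_nf at E2; omega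
    have hE3 : n' = m * g + n := by
      rw [hh1] at E3; ring_nf at E3; linarith
    have hg0 : g = 0 := by
      rcases lt_trichotomy g 0 with hgg | hgg | hgg
      · have h1 : g ≤ -1 := by omega
        have : m * g ≤ m * (-1) := mul_le_mul_of_nonneg_left h1 (by omega)
        linarith
      · exact hgg
      · have h1 : 1 ≤ g := by omega
        have : m * 1 ≤ m * g := mul_le_mul_of_nonneg_left h1 (by omega)
        linarith
    have hnn : n = n' := by rw [hE3, hg0]; ring
    refine ⟨hmm, hnn, ?_⟩
    have c00 : γ 0 0 = 1 := by rw [← he, he1]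
    have c01 : γ 0 1 = 0 := by rw [← hf, hf0]
    have c10 : γ 1 0 = 0 := by rw [← hg, hg0]
    have c11 : γ 1 1 = 1 := by rw [← hhh, hh1]
    ext i j
    fin_cases i <;> fin_cases j <;>
      simp [Matrix.one_apply, c00, c01, c10, c11]
  · exfalso
    rw [hf0, he1, hh1] at E2; ring_nf at E2; omega

lemma primitive_double_root (a b c d p0 q0 : ℤ) (hq0 : q0 ≠ 0)
    (hx0 : 3*a*p0^2 + 2*b*p0*q0 + c*q0^2 = 0)
    (hy0 : b*p0^2 + 2*c*p0*q0 + 3*d*q0^2 = 0) :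
    ∃ p q r s : ℤ, p*s - q*r = 1 ∧ 3*a*p^2 + 2*b*p*q + c*q^2 = 0 ∧
      b*p^2 + 2*c*p*q + 3*d*q^2 = 0 := by
  have hg0 : (Int.gcd p0 q0 : ℤ) ≠ 0 := by
    simp only [ne_eq, Int.natCast_eq_zero, Int.gcd_eq_zero_iff, not_and]
    intro _; exact hq0
  obtain ⟨p, hp⟩ : (Int.gcd p0 q0 : ℤ) ∣ p0 := Int.gcd_dvd_left p0 q0
  obtain ⟨q, hq⟩ : (Int.gcd p0 q0 : ℤ) ∣ q0 := Int.gcd_dvd_right p0 q0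
  set g : ℤ := (Int.gcd p0 q0 : ℤ) with hgdef
  have hbez : p * Int.gcdA p0 q0 + q * Int.gcdB p0 q0 = 1 := by
    have h := Int.gcd_eq_gcd_ab p0 q0
    have h2 : g * (p * Int.gcdA p0 q0 + q * Int.gcdB p0 q0) = g * 1 := by
      linear_combination -h - (Int.gcdA p0 q0)*hp - (Int.gcdB p0 q0)*hq
    exact mul_left_cancel₀ hg0 h2
  refine ⟨p, q, -(Int.gcdB p0 q0), Int.gcdA p0 q0, by linear_combination hbez, ?_, ?_⟩
  · have h2 : g^2 * (3*a*p^2 + 2*b*p*q + c*q^2) = 0 := by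
      linear_combination hx0 + (-(3*a*(p0+g*p)) - 2*b*q0)*hp + (-(2*b*g*p) - c*(q0+g*q))*hq
    exact (mul_eq_zero.mp h2).resolve_left (pow_ne_zero 2 hg0)
  · have h2 : g^2 * (b*p^2 + 2*c*p*q + 3*d*q^2) = 0 := by
      linear_combination hy0 + (-(b*(p0+g*p)) - 2*c*q0)*hp + (-(2*c*g*p) - 3*d*(q0+g*q))*hq
    exact (mul_eq_zero.mp h2).resolve_left (pow_ne_zero 2 hg0)

lemma cube_coeffs (a b c d : ℤ) (ha : a ≠ 0) (hP : b^2 - 3*a*c = 0) (hQ : b*c - 9*a*d = 0) :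
    ∃ p q e f k : ℤ, e*q - p*f = 1 ∧ a = k*p^3 ∧ b = 3*k*p^2*q ∧ c = 3*k*p*q^2 ∧ d = k*q^3 := by
  have hg0 : (Int.gcd (3*a) b : ℤ) ≠ 0 := by
    simp only [ne_eq, Int.natCast_eq_zero, Int.gcd_eq_zero_iff, not_and]
    intro h; omega
  obtain ⟨p, hp⟩ : (Int.gcd (3*a) b : ℤ) ∣ 3*a := Int.gcd_dvd_left (3*a) b
  obtain ⟨q, hq⟩ : (Int.gcd (3*a) b : ℤ) ∣ b := Int.gcd_dvd_right (3*a) b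
  set g : ℤ := (Int.gcd (3*a) b : ℤ) with hgdef
  have hbez : p * Int.gcdA (3*a) b + q * Int.gcdB (3*a) b = 1 := by
    have h := Int.gcd_eq_gcd_ab (3*a) b
    have h2 : g * (p * Int.gcdA (3*a) b + q * Int.gcdB (3*a) b) = g * 1 := by
      linear_combination -h - (Int.gcdA (3*a) b)*hp - (Int.gcdB (3*a) b)*hq
    exact mul_left_cancel₀ hg0 h2
  have hcube1 : g^3 * p^3 = 27*a^2*a := by
    linear_combination (-((3*a)^2 + 3*a*(g*p) + (g*p)^2))*hp
  have hb3 : 27*a^2*d = b^3 := by linear_combination (-b)*hP - 3*a*hQ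
  have hcube2 : g^3 * q^3 = 27*a^2*d := by
    linear_combination (-(b^2 + b*(g*q) + (g*q)^2))*hq - hb3
  have hco : IsCoprime p q := ⟨Int.gcdA (3*a) b, Int.gcdB (3*a) b, by linear_combination hbez⟩
  obtain ⟨U, V, hUV⟩ := (hco.pow (m := 3) (n := 3))
  set k : ℤ := U*a + V*d with hk
  have h27 : g^3 = 27*a^2*k := by
    linear_combination (-(g^3))*hUV + U*hcube1 + V*hcube2
  have h27a : (27*a^2 : ℤ) ≠ 0 := by positivity
  have hE : 27*a^2*c = 9*a*b^2 := by linear_combination (-9*a)*hP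
  refine ⟨p, q, Int.gcdB (3*a) b, -(Int.gcdA (3*a) b), k, by linear_combination hbez,
    ?_, ?_, ?_, ?_⟩
  · exact mul_left_cancel₀ h27a (show 27*a^2*a = 27*a^2*(k*p^3) by
      linear_combination -hcube1 + p^3*h27)
  · exact mul_left_cancel₀ h27a (show 27*a^2*b = 27*a^2*(3*k*p^2*q) by
      linear_combination (3*b*(3*a+g*p))*hp + (3*g^2*p^2)*hq + (3*p^2*q)*h27)
  · exact mul_left_cancel₀ h27a (show 27*a^2*c = 27*a^2*(3*k*p*q^2) by
      linear_combination hE + 3*b^2*hp + (3*g*p*(b+g*q))*hq + (3*p*q^2)*h27)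
  · exact mul_left_cancel₀ h27a (show 27*a^2*d = 27*a^2*(k*q^3) by
      linear_combination -hcube2 + q^3*h27)

lemma exists_canonical (v : Fin 4 → ℤ) (p q r s : ℤ) (hdet : p*s - q*r = 1)
    (hx : 3*v 0*p^2 + 2*v 1*p*q + v 2*q^2 = 0)
    (hy : v 1*p^2 + 2*v 2*p*q + 3*v 3*q^2 = 0)
    (hnc : ¬ ∃ (γ : Matrix (Fin 2) (Fin 2) ℤ) (k : ℤ),
        γ.det = 1 ∧ cubicActsZ γ ![0, 0, 0, k] v) :
    ∃ m n : ℤ, 1 ≤ m ∧ 0 ≤ n ∧ n < m ∧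
      ∃ γ : Matrix (Fin 2) (Fin 2) ℤ, γ.det = 1 ∧ cubicActsZ γ ![0,0,m,n] v := by
  have h3 : v 0*p^3 + v 1*p^2*q + v 2*p*q^2 + v 3*q^3 = 0 := by
    have h33 : 3*(v 0*p^3 + v 1*p^2*q + v 2*p*q^2 + v 3*q^3) = 0 := by
      linear_combination p*hx + q*hy
    linarith
  set C := 3*v 0*p*r^2 + v 1*(q*r^2 + 2*p*r*s) + v 2*(p*s^2 + 2*q*r*s) + 3*v 3*q*s^2 with hC
  set D := v 0*r^3 + v 1*r^2*s + v 2*r*s^2 + v 3*s^3 with hD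
  have hdetδ : (!![p, q; r, s] : Matrix (Fin 2) (Fin 2) ℤ).det = 1 := by
    rw [Matrix.det_fin_two_of]; linarith
  have hact : cubicActsZ !![p,q;r,s] v ![0,0,C,D] := by
    intro x y
    simp only [formEvalZ, Matrix.cons_val_zero, Matrix.cons_val_one, Matrix.head_cons,
      Matrix.cons_val_two, Matrix.tail_cons, Matrix.cons_val_three, Matrix.cons_val',
      Matrix.empty_val', Matrix.cons_val_fin_one, Matrix.head_fin_const, Matrix.of_apply]
    linear_combination (-(x^3))*h3 + (-(x^2*y))*(r*hx + s*hy)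
  by_cases hC0 : C = 0
  · exfalso
    apply hnc
    rw [hC0] at hact
    exact ⟨adj2 !![p,q;r,s], D, adj2_det hdetδ, acts_inv hdetδ hact⟩
  · obtain ⟨σ, hσ1, hσC⟩ : ∃ σ : ℤ, σ*σ = 1 ∧ 0 < σ*C := by
      rcases lt_or_gt_of_ne hC0 with h | h
      exacts [⟨-1, by ring, by linarith⟩, ⟨1, by ring, by linarith⟩]
    have hdet2 : (!![σ,0;0,σ] : Matrix (Fin 2) (Fin 2) ℤ).det = 1 := by
      rw [Matrix.det_fin_two_of]; linear_combination hσ1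
    have hact2 : cubicActsZ !![σ,0;0,σ] ![0,0,C,D] ![0,0,σ*C,σ*D] := by
      intro x y
      simp only [formEvalZ, Matrix.cons_val_zero, Matrix.cons_val_one, Matrix.head_cons,
        Matrix.cons_val_two, Matrix.tail_cons, Matrix.cons_val_three, Matrix.cons_val',
        Matrix.empty_val', Matrix.cons_val_fin_one, Matrix.head_fin_const, Matrix.of_apply]
      linear_combination (-(σ*(C*x*y^2 + D*y^3)))*hσ1
    have hm0 : (0:ℤ) < σ*C := hσC
    have hdet3 : (!![1,0; -((σ*D)/(σ*C)),1] : Matrix (Fin 2) (Fin 2) ℤ).det = 1 := by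
      rw [Matrix.det_fin_two_of]; ring
    have hact3 : cubicActsZ !![1,0; -((σ*D)/(σ*C)),1] ![0,0,σ*C,σ*D]
        ![0,0,σ*C,(σ*D) % (σ*C)] := by
      intro x y
      simp only [formEvalZ, Matrix.cons_val_zero, Matrix.cons_val_one, Matrix.head_cons,
        Matrix.cons_val_two, Matrix.tail_cons, Matrix.cons_val_three, Matrix.cons_val',
        Matrix.empty_val', Matrix.cons_val_fin_one, Matrix.head_fin_const, Matrix.of_apply]
      rw [Int.emod_def]; ring
    have hA := acts_comp hact hact2
    have hB := acts_comp hA hact3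
    have hdetB : ((!![1,0; -((σ*D)/(σ*C)),1] : Matrix (Fin 2) (Fin 2) ℤ) *
        (!![σ,0;0,σ] * !![p,q;r,s])).det = 1 := by
      rw [Matrix.det_mul, Matrix.det_mul, hdet3, hdet2, hdetδ]; ring
    exact ⟨σ*C, (σ*D) % (σ*C), by omega,
      Int.emod_nonneg _ (by omega), Int.emod_lt_of_pos _ hm0,
      adj2 _, adj2_det hdetB, acts_inv hdetB hB⟩

/-- Decomposition of type II singular integral forms: every nonzero integral binary cubic
form of zero discriminant not `SL₂(ℤ)`-equivalent to any `(0,0,0,k)` is `SL₂(ℤ)`-equivalent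
to exactly one `(0,0,m,n)` with `m ≥ 1`, `0 ≤ n < m`; moreover the stabilizer in `SL₂(ℤ)`
of every such form `(0,0,m,n)` is trivial. -/
theorem typeII_orbit_decomposition :
    (∀ v : Fin 4 → ℤ, v ≠ 0 → cubicDiscZ v = 0 →
      (¬ ∃ (γ : Matrix (Fin 2) (Fin 2) ℤ) (k : ℤ),
        γ.det = 1 ∧ cubicActsZ γ ![0, 0, 0, k] v) →
      ∃! mn : ℤ × ℤ, 1 ≤ mn.1 ∧ 0 ≤ mn.2 ∧ mn.2 < mn.1 ∧
        ∃ γ : Matrix (Fin 2) (Fin 2) ℤ, γ.det = 1 ∧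
          cubicActsZ γ ![0, 0, mn.1, mn.2] v) ∧
    (∀ m n : ℤ, 1 ≤ m → 0 ≤ n → n < m →
      ∀ γ : Matrix (Fin 2) (Fin 2) ℤ, γ.det = 1 →
        cubicActsZ γ ![0, 0, m, n] ![0, 0, m, n] → γ = 1) := by
  constructor
  · intro v hv hdisc hnc
    simp only [cubicDiscZ] at hdisc
    -- produce a primitive double root
    obtain ⟨p, q, r, s, hpq, hx, hy⟩ :
        ∃ p q r s : ℤ, p*s - q*r = 1 ∧ 3*v 0*p^2 + 2*v 1*p*q + v 2*q^2 = 0 ∧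
          v 1*p^2 + 2*v 2*p*q + 3*v 3*q^2 = 0 := by
      by_cases hP : v 1^2 - 3*v 0*v 2 = 0
      · have hQ : v 1*v 2 - 9*v 0*v 3 = 0 := by
          have hQ2 : (v 1*v 2 - 9*v 0*v 3)^2 = 0 := by
            linear_combination (-3)*hdisc + (4*(v 2^2 - 3*v 1*v 3))*hP
          exact sq_eq_zero_iff.mp hQ2
        by_cases hR : v 2^2 - 3*v 1*v 3 = 0
        · -- perfect cube case: contradiction with hnc
          exfalso
          apply hnc
          by_cases h0 : v 0 = 0
          · have hb0 : v 1 = 0 := by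
              have h2 : v 1^2 = 0 := by linear_combination hP + 3*v 2*h0
              exact sq_eq_zero_iff.mp h2
            have hc0 : v 2 = 0 := by
              have h2 : v 2^2 = 0 := by linear_combination hR + 3*v 3*hb0
              exact sq_eq_zero_iff.mp h2
            refine ⟨1, v 3, Matrix.det_one, ?_⟩
            intro x y
            simp [formEvalZ, Matrix.one_apply, h0, hb0, hc0]
          · obtain ⟨p, q, e, f, k, hef, hA, hB, hC2, hD⟩ :=
              cube_coeffs (v 0) (v 1) (v 2) (v 3) h0 hP hQ
            refine ⟨!![e, p; f, q], k, ?_, ?_⟩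
            · rw [Matrix.det_fin_two_of]; linarith
            · intro x y
              simp only [formEvalZ, Matrix.cons_val_zero, Matrix.cons_val_one,
                Matrix.head_cons, Matrix.cons_val_two, Matrix.tail_cons,
                Matrix.cons_val_three, Matrix.cons_val', Matrix.empty_val',
                Matrix.cons_val_fin_one, Matrix.head_fin_const, Matrix.of_apply]
              linear_combination x^3*hA + x^2*y*hB + x*y^2*hC2 + y^3*hD
        · -- P = Q = 0, R ≠ 0  ⇒  v 0 = v 1 = 0, double root (1,0)
          have hb0 : v 1 = 0 := by
            have h2 : v 1 * (v 2^2 - 3*v 1*v 3) = 0 := by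
              linear_combination v 2*hQ - 3*v 3*hP
            exact (mul_eq_zero.mp h2).resolve_right hR
          have ha0 : v 0 = 0 := by
            by_contra h0
            have hac : v 0 * v 2 = 0 := by
              have : 3*(v 0*v 2) = 0 := by linear_combination -hP + v 1*hb0
              linarith
            have hc0 : v 2 = 0 := (mul_eq_zero.mp hac).resolve_left h0
            have had : v 0 * v 3 = 0 := by
              have : 9*(v 0*v 3) = 0 := by linear_combination -hQ + v 2*hb0
              linarith
            have hd0 : v 3 = 0 := (mul_eq_zero.mp had).resolve_left h0
            apply hR
            rw [hc0, hb0]; ring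
          exact ⟨1, 0, 0, 1, by ring, by linear_combination 3*ha0,
            by linear_combination hb0⟩
      · -- P ≠ 0 : Hessian double root
        have hq0 : -2*(v 1^2 - 3*v 0*v 2) ≠ 0 := by
          intro h; apply hP; linarith
        apply primitive_double_root (v 0) (v 1) (v 2) (v 3)
          (v 1*v 2 - 9*v 0*v 3) (-2*(v 1^2 - 3*v 0*v 2)) hq0
        · linear_combination (-9*v 0)*hdisc
        · linear_combination (-3*v 1)*hdisc
    obtain ⟨m, n, hm, hn, hnm, γ, hγ, hactγ⟩ := exists_canonical v p q r s hpq hx hy hnc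
    refine ⟨(m, n), ⟨hm, hn, hnm, γ, hγ, hactγ⟩, ?_⟩
    rintro ⟨m', n'⟩ ⟨hm', hn', hnm', γ', hγ', hactγ'⟩
    have hinv := acts_inv hγ hactγ
    have hcomp := acts_comp hactγ' hinv
    have hdetc : ((adj2 γ) * γ').det = 1 := by
      rw [Matrix.det_mul, adj2_det hγ, hγ']; ring
    obtain ⟨h1, h2, -⟩ := canonical_eq hm' hn' hnm' hm hn hnm hdetc hcomp
    rw [Prod.mk.injEq]
    exact ⟨h1, h2⟩
  · intro m n hm hn hnm γ hdet hact
    exact (canonical_eq hm hn hnm hm hn hnm hdet hact).2.2
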